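/- Let K : Ω⁺ → M₂ be continuous, and for each integer k ≥ 0 define η_k(x) := x^k·I + ∫_{−x}^{x} K(x,t)·t^k dt (the image of t^k·I under the Volterra transmutation operator with kernel K). Write the Legendre polynomial of degree n as P_n(x) = Σ_{k=0}^{n} l_{k,n}·x^k. Then for every n ≥ 0 and every x ∈ (0,b], the Fourier–Legendre coefficient K_n satisfies K_n(x) = ((2n+1)/2)·[ −I + Σ_{k=0}^{n} (l_{k,n}/x^k)·η_k(x) ]. -/

import Mathlib

noncomputable section

open MeasureTheory Set Filter Topology Polynomial intervalIntegral

abbrev M2 : Type := Matrix (Fin 2) (Fin 2) ℂ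

attribute [local instance] Matrix.normedAddCommGroup Matrix.normedSpace

/-- The matrix `B` of the Dirac system. -/
def Bmat : M2 := !![0, 1; -1, 0]

/-- The Dirac potential built from the scalar functions `p, q`. -/
def diracPot (p q : ℝ → ℂ) : ℝ → M2 := fun x => !![p x, q x; q x, -p x]

/-- Operator norm of a `2 × 2` complex matrix, induced by the Euclidean norm on `ℂ²`. -/
def opNorm (A : M2) : ℝ := ‖Matrix.toEuclideanCLM (𝕜 := ℂ) A‖

/-- The Legendre polynomial of degree `n` (Rodrigues' formula). -/
def legendreP (n : ℕ) : Polynomial ℝ :=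
  ((2 ^ n * n.factorial : ℝ)⁻¹) • (fun r => derivative r)^[n] ((X ^ 2 - 1 : Polynomial ℝ) ^ n)

/-- The domain `Ω⁺ = {(x,t) : 0 ≤ x ≤ b, |t| ≤ x}`. -/
def OmegaPlus (b : ℝ) : Set (ℝ × ℝ) := {z | 0 ≤ z.1 ∧ z.1 ≤ b ∧ |z.2| ≤ z.1}

/-- `K` is a transmutation kernel for the potential `Q` on `Ω⁺`: it satisfies the
hyperbolic PDE `B⬝∂ₓK + ∂ₜK⬝B = -Q⬝K` together with the two Goursat conditions. -/
def IsTransKernel (b : ℝ) (Q : ℝ → M2) (K : ℝ → ℝ → M2) : Prop :=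
  (∀ x t : ℝ, (x, t) ∈ OmegaPlus b →
      Bmat * deriv (fun s => K s t) x + deriv (fun s => K x s) t * Bmat = -(Q x * K x t)) ∧
  (∀ x ∈ Set.Icc (0 : ℝ) b, Bmat * K x x - K x x * Bmat = -Q x) ∧
  (∀ x ∈ Set.Icc (0 : ℝ) b, Bmat * K x (-x) + K x (-x) * Bmat = 0)

/-- The `n`-th Fourier–Legendre coefficient `K_n(x)` of the kernel `K`. -/
def Kcoef (K : ℝ → ℝ → M2) (n : ℕ) (x : ℝ) : M2 :=
  ((2 * (n : ℝ) + 1) / 2) • ∫ t in (-x)..x, ((legendreP n).eval (t / x)) • K x t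

/-- The truncated kernel `K^N(x,t) = Σ_{n=0}^{N} (1/x)·K_n(x)·P_n(t/x)`. -/
def KN (K : ℝ → ℝ → M2) (N : ℕ) (x t : ℝ) : M2 :=
  ∑ n ∈ Finset.range (N + 1), (x⁻¹ * (legendreP n).eval (t / x)) • Kcoef K n x

/-- The free solution `U₀(λ,x)`. -/
def U0 (lam : ℂ) (x : ℝ) : M2 :=
  !![Complex.cos (lam * x), -Complex.sin (lam * x);
     Complex.sin (lam * x), Complex.cos (lam * x)]

/-- `U(λ,x) = U₀(λ,x) + ∫_{-x}^{x} K(x,t)·U₀(λ,t) dt`. -/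
def Umat (K : ℝ → ℝ → M2) (lam : ℂ) (x : ℝ) : M2 :=
  U0 lam x + ∫ t in (-x)..x, K x t * U0 lam t

/-- `U^N(λ,x) = U₀(λ,x) + ∫_{-x}^{x} K^N(x,t)·U₀(λ,t) dt`. -/
def UmatN (K : ℝ → ℝ → M2) (N : ℕ) (lam : ℂ) (x : ℝ) : M2 :=
  U0 lam x + ∫ t in (-x)..x, KN K N x t * U0 lam t

/-- `θ_n(x) = xⁿ·K_n(x)` for `n ≥ 0`, and `θ_{-1}(x) = -K₀(x)/x`. -/
def theta (K : ℝ → ℝ → M2) (n : ℤ) : ℝ → M2 := fun x =>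
  if n = -1 then -(x⁻¹ • Kcoef K 0 x) else (x ^ n.toNat : ℝ) • Kcoef K n.toNat x

/-- The integral operator `S[H](x) = U(x)·∫₀ˣ U(t)⁻¹·Bᵀ·H(t) dt`, where `U = U(0,·)`. -/
def Sop (U : ℝ → M2) (H : ℝ → M2) (x : ℝ) : M2 :=
  U x * ∫ t in (0 : ℝ)..x, (U t)⁻¹ * Bmat.transpose * H t


lemma iter_eval_one (n : ℕ) : ∀ g : Polynomial ℝ,
    ((fun r => derivative r)^[n] ((X - 1)^n * g)).eval 1 = n.factorial * g.eval 1 := by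
  induction n with
  | zero => simp
  | succ n ih =>
    intro g
    rw [Function.iterate_succ_apply]
    have h : derivative ((X - 1)^(n+1) * g)
        = (X - 1)^n * (C ((n:ℝ)+1) * g + (X - 1) * derivative g) := by
      rw [derivative_mul, derivative_pow]
      simp only [derivative_sub, derivative_X, derivative_one, sub_zero, Nat.cast_add,
        Nat.cast_one, Nat.add_sub_cancel, map_add, map_one, C_eq_natCast]
      ring
    rw [h, ih]
    simp [Nat.factorial_succ]
    ring

lemma legendreP_eval_one (n : ℕ) : (legendreP n).eval 1 = 1 := by
  have h : ((X ^ 2 - 1 : Polynomial ℝ) ^ n) = (X - 1)^n * ((X + 1)^n) := by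
    rw [← mul_pow]; ring_nf
  rw [legendreP, eval_smul, h, iter_eval_one]
  have h1 : ((X + 1 : Polynomial ℝ)).eval 1 = 2 := by norm_num
  rw [eval_pow, h1]
  have h2 : ((2:ℝ) ^ n * n.factorial) ≠ 0 := by positivity
  field_simp
  ring_nf
  rw [mul_inv_cancel₀ (by positivity), one_mul, ← mul_pow, inv_mul_cancel₀ two_ne_zero, one_pow]

lemma legendreP_natDegree_le (n : ℕ) : (legendreP n).natDegree ≤ n := by
  rw [legendreP]
  refine (natDegree_smul_le _ _).trans ?_
  refine (natDegree_iterate_derivative _ n).trans ?_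
  have : ((X ^ 2 - 1 : Polynomial ℝ) ^ n).natDegree ≤ 2 * n := by
    refine natDegree_pow_le.trans ?_
    have h2 : (X ^ 2 - 1 : Polynomial ℝ).natDegree ≤ 2 := by
      refine (natDegree_sub_le _ _).trans ?_
      simp
    calc n * (X ^ 2 - 1 : Polynomial ℝ).natDegree ≤ n * 2 := Nat.mul_le_mul_left n h2
      _ = 2 * n := by ring
  omega

instance instENormedAddMonoidM2 : ENormedAddMonoid M2 := @NormedAddGroup.toENormedAddMonoid M2 _

set_option maxHeartbeats 1000000 in
/-- the Fourier–Legendre coefficients in terms of the images `η_k` of the powers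
`tᵏ·I` under the Volterra transmutation operator. -/
theorem statement19 (b : ℝ) (hb : 0 < b) (K : ℝ → ℝ → M2)
    (hK : ContinuousOn (fun z : ℝ × ℝ => K z.1 z.2) (OmegaPlus b)) :
    ∀ n : ℕ, ∀ x ∈ Set.Ioc 0 b,
      Kcoef K n x = ((2 * (n : ℝ) + 1) / 2) •
        (-(1 : M2) + ∑ k ∈ Finset.range (n + 1),
          ((legendreP n).coeff k / x ^ k) •
            ((x ^ k : ℝ) • (1 : M2) + ∫ t in (-x)..x, (t ^ k : ℝ) • K x t)) := by
  intro n x hx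
  obtain ⟨hx0, hxb⟩ := hx
  have hxne : x ≠ 0 := ne_of_gt hx0
  have hxpk : ∀ k : ℕ, (x:ℝ) ^ k ≠ 0 := fun k => pow_ne_zero k hxne
  -- continuity / integrability
  have hKc : ContinuousOn (fun t => K x t) (Set.uIcc (-x) x) := by
    have hmaps : Set.MapsTo (fun t : ℝ => ((x, t) : ℝ × ℝ)) (Set.uIcc (-x) x) (OmegaPlus b) := by
      intro t ht
      rw [Set.uIcc_of_le (by linarith)] at ht
      exact ⟨le_of_lt hx0, hxb, abs_le.mpr ⟨ht.1, ht.2⟩⟩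
    exact hK.comp (Continuous.continuousOn (by fun_prop)) hmaps
  have hint : ∀ k : ℕ, IntervalIntegrable (fun t => (t^k : ℝ) • K x t) volume (-x) x :=
    fun k => (((continuous_pow k).continuousOn).smul hKc).intervalIntegrable
  have hdeg : (legendreP n).natDegree < n + 1 := Nat.lt_succ_of_le (legendreP_natDegree_le n)
  -- LHS integral as a sum
  have hL : (∫ t in (-x)..x, ((legendreP n).eval (t/x)) • K x t)
      = ∑ k ∈ Finset.range (n+1),
          ((legendreP n).coeff k / x^k) • ∫ t in (-x)..x, (t^k:ℝ) • K x t := by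
    have step1 : (∫ t in (-x)..x, ((legendreP n).eval (t/x)) • K x t)
        = ∫ t in (-x)..x, ∑ k ∈ Finset.range (n+1),
            ((legendreP n).coeff k / x^k) • ((t^k:ℝ) • K x t) := by
      refine intervalIntegral.integral_congr ?_
      intro t _
      show eval (t / x) (legendreP n) • K x t = _
      rw [eval_eq_sum_range' hdeg, Finset.sum_smul]
      refine Finset.sum_congr rfl (fun k _ => ?_)
      rw [smul_smul]
      congr 1
      rw [div_pow]
      ring
    have hcomb : ∀ k ∈ Finset.range (n+1), IntervalIntegrable
        (fun t => ((legendreP n).coeff k / x^k) • ((t^k:ℝ) • K x t)) volume (-x) x :=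
      fun k _ => ((continuousOn_const (c := (legendreP n).coeff k / x^k)).smul
        (((continuous_pow k).continuousOn).smul hKc)).intervalIntegrable
    rw [step1, intervalIntegral.integral_finset_sum hcomb]
    refine Finset.sum_congr rfl (fun k _ => ?_)
    rw [intervalIntegral.integral_smul]
  -- RHS simplification
  have hR : (-(1 : M2) + ∑ k ∈ Finset.range (n + 1),
        ((legendreP n).coeff k / x ^ k) •
          ((x ^ k : ℝ) • (1 : M2) + ∫ t in (-x)..x, (t ^ k : ℝ) • K x t))
      = ∑ k ∈ Finset.range (n+1),
          ((legendreP n).coeff k / x^k) • ∫ t in (-x)..x, (t^k:ℝ) • K x t := by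
    have hsplit : ∀ k ∈ Finset.range (n+1),
        ((legendreP n).coeff k / x ^ k) •
          ((x ^ k : ℝ) • (1 : M2) + ∫ t in (-x)..x, (t ^ k : ℝ) • K x t)
        = (legendreP n).coeff k • (1 : M2)
          + ((legendreP n).coeff k / x^k) • ∫ t in (-x)..x, (t^k:ℝ) • K x t := by
      intro k _
      rw [smul_add, smul_smul, div_mul_cancel₀ _ (hxpk k)]
    rw [Finset.sum_congr rfl hsplit, Finset.sum_add_distrib, ← Finset.sum_smul]
    have hcoef : ∑ k ∈ Finset.range (n+1), (legendreP n).coeff k = 1 := by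
      have := eval_eq_sum_range' hdeg (1 : ℝ)
      rw [legendreP_eval_one] at this
      simpa using this.symm
    rw [hcoef]
    simp
  rw [Kcoef, hL, hR]


end
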